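/- The pair (Δ, ε) makes A = A_{h,t} a coassociative counital R-coalgebra: (Δ ⊗ id) ∘ Δ = (id ⊗ Δ) ∘ Δ as maps A → A ⊗[R] A ⊗[R] A, and (ε ⊗ id) ∘ Δ = id = (id ⊗ ε) ∘ Δ under the canonical isomorphisms R ⊗[R] A ≅ A ≅ A ⊗[R] R. -/

import Mathlib

open Polynomial
open scoped TensorProduct

/-- The Frobenius algebra `A_{h,t} = R[X]/(X² − h·X − t)`. -/
noncomputable abbrev Aht (R : Type*) [CommRing R] (h t : R) : Type _ :=
  AdjoinRoot ((X : R[X]) ^ 2 - C h * X - C t)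

/-- The image of the variable `X` in `A_{h,t}`. -/
noncomputable def Xht (R : Type*) [CommRing R] (h t : R) : Aht R h t :=
  AdjoinRoot.root _

lemma aht_monic {R : Type*} [CommRing R] (h t : R) :
    ((X : R[X]) ^ 2 - C h * X - C t).Monic := by
  have : ((X : R[X]) ^ 2 - C h * X - C t) = X ^ 2 - (C h * X + C t) := by ring
  rw [this]
  apply Polynomial.monic_X_pow_sub (n := 2)
  calc (C h * X + C t).degree ≤ max (C h * X).degree (C t).degree := Polynomial.degree_add_le _ _
    _ < 2 := lt_of_le_of_lt (by
        apply max_le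
        · calc (C h * X).degree ≤ (C h).degree + X.degree := Polynomial.degree_mul_le _ _
            _ ≤ 0 + 1 := add_le_add Polynomial.degree_C_le Polynomial.degree_X_le
            _ = 1 := by norm_num
        · exact le_trans Polynomial.degree_C_le (by norm_num)) (by norm_num)

lemma aht_ext {R : Type*} [CommRing R] (h t : R) {M : Type*} [AddCommGroup M] [Module R M]
    (f g : Aht R h t →ₗ[R] M) (h1 : f 1 = g 1) (hX : f (Xht R h t) = g (Xht R h t)) :
    f = g := by
  set pb := AdjoinRoot.powerBasis' (aht_monic h t) with hpb
  apply Module.Basis.ext pb.basis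
  intro i
  rw [pb.basis_eq_pow]
  have hdim : pb.dim ≤ 2 := by
    rw [hpb, AdjoinRoot.powerBasis'_dim]
    compute_degree
  have hi : (i : ℕ) = 0 ∨ (i : ℕ) = 1 := by have := i.isLt; omega
  have hgen : pb.gen = Xht R h t := rfl
  rcases hi with hi | hi <;> rw [hi, hgen] <;> simpa using ‹_›

theorem stmt3 {R : Type*} [CommRing R] (h t : R)
    (ε : Aht R h t →ₗ[R] R) (hε1 : ε 1 = 0) (hεX : ε (Xht R h t) = 1)
    (Δ : Aht R h t →ₗ[R] Aht R h t ⊗[R] Aht R h t)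
    (hΔ1 : Δ 1 = Xht R h t ⊗ₜ[R] 1 + 1 ⊗ₜ[R] Xht R h t - h • ((1 : Aht R h t) ⊗ₜ[R] 1))
    (hΔX : Δ (Xht R h t) = Xht R h t ⊗ₜ[R] Xht R h t + t • ((1 : Aht R h t) ⊗ₜ[R] 1)) :
    (∀ x : Aht R h t,
      TensorProduct.assoc R (Aht R h t) (Aht R h t) (Aht R h t)
          (TensorProduct.map Δ LinearMap.id (Δ x)) =
        TensorProduct.map LinearMap.id Δ (Δ x)) ∧
    (∀ x : Aht R h t,
      TensorProduct.lid R (Aht R h t) (TensorProduct.map ε LinearMap.id (Δ x)) = x) ∧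
    (∀ x : Aht R h t,
      TensorProduct.rid R (Aht R h t) (TensorProduct.map LinearMap.id ε (Δ x)) = x) := by
  set A := Aht R h t
  set xx := Xht R h t with hxx
  refine ⟨?_, ?_, ?_⟩
  · have key : (TensorProduct.assoc R A A A).toLinearMap ∘ₗ
        TensorProduct.map Δ LinearMap.id ∘ₗ Δ = TensorProduct.map LinearMap.id Δ ∘ₗ Δ := by
      apply aht_ext h t <;>
      · simp only [← hxx, LinearMap.comp_apply, LinearEquiv.coe_coe, hΔ1, hΔX, map_add, map_sub,
          map_smul, TensorProduct.add_tmul, TensorProduct.sub_tmul, TensorProduct.tmul_add,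
          TensorProduct.tmul_sub, ← TensorProduct.smul_tmul', TensorProduct.tmul_smul,
          TensorProduct.map_tmul, LinearMap.id_apply, TensorProduct.assoc_tmul,
          smul_add, smul_sub]
        abel
    exact fun x => LinearMap.congr_fun key x
  · have key : (TensorProduct.lid R A).toLinearMap ∘ₗ
        (TensorProduct.map ε LinearMap.id ∘ₗ Δ) = LinearMap.id := by
      apply aht_ext h t <;>
      · simp only [← hxx, LinearMap.comp_apply, LinearEquiv.coe_coe, hΔ1, hΔX, map_add, map_sub,
          map_smul, TensorProduct.map_tmul, LinearMap.id_apply, hε1, hεX,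
          TensorProduct.lid_tmul, ← TensorProduct.smul_tmul', TensorProduct.tmul_smul,
          zero_smul, one_smul, smul_zero, sub_zero, add_zero, zero_add, smul_add, smul_sub]
    exact fun x => LinearMap.congr_fun key x
  · have key : (TensorProduct.rid R A).toLinearMap ∘ₗ
        (TensorProduct.map LinearMap.id ε ∘ₗ Δ) = LinearMap.id := by
      apply aht_ext h t <;>
      · simp only [← hxx, LinearMap.comp_apply, LinearEquiv.coe_coe, hΔ1, hΔX, map_add, map_sub,
          map_smul, TensorProduct.map_tmul, LinearMap.id_apply, hε1, hεX,
          TensorProduct.rid_tmul, ← TensorProduct.smul_tmul', TensorProduct.tmul_smul,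
          zero_smul, one_smul, smul_zero, sub_zero, add_zero, zero_add, smul_add, smul_sub]
    exact fun x => LinearMap.congr_fun key x
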